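/- Let P be a real m×n matrix, x ∈ ℝ^n, ζ > 0, and let f : ℝ → ℝ be convex and twice differentiable. Define res_x(Δ) = ∑_i f'((Px)_i)(PΔ)_i − (2e)^{−1}∑_i f''((Px)_i)(PΔ)_i². Let Δ* ∈ ℝ^n and suppose there is η > 0 such that res_x(λ·Δ*) ≤ res_x(Δ*) for all λ ∈ (1−η, 1+η), and that res_x(Δ*) ≤ ζ. Then ∑_i f''((Px)_i)·(PΔ*)_i² = 2e·res_x(Δ*) ≤ 2e·ζ. -/

import Mathlib

open scoped BigOperators

/-- The residual objective res_x(Δ) (with the corrected constant (2e)⁻¹). -/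
noncomputable def resObj (m n : ℕ) (P : Matrix (Fin m) (Fin n) ℝ)
    (f : ℝ → ℝ) (x Δ : Fin n → ℝ) : ℝ :=
  (∑ i, deriv f ((P.mulVec x) i) * (P.mulVec Δ) i) -
    (2 * Real.exp 1)⁻¹ * ∑ i, deriv (deriv f) ((P.mulVec x) i) * (P.mulVec Δ) i ^ 2

/-- Lemma 4.4: local optimality of Δ* under scaling bounds the quadratic term:
∑ f''((Px)_i)(PΔ*)_i² = 2e·res(Δ*) ≤ 2e·ζ. -/
theorem residual_quadratic_bound
    (m n : ℕ) (P : Matrix (Fin m) (Fin n) ℝ) (x : Fin n → ℝ)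
    (ζ : ℝ) (hζ : 0 < ζ)
    (f : ℝ → ℝ) (hconv : ConvexOn ℝ Set.univ f)
    (hf1 : Differentiable ℝ f) (hf2 : Differentiable ℝ (deriv f))
    (Δstar : Fin n → ℝ) (η : ℝ) (hη : 0 < η)
    (hloc : ∀ lam : ℝ, lam ∈ Set.Ioo (1 - η) (1 + η) →
      resObj m n P f x (lam • Δstar) ≤ resObj m n P f x Δstar)
    (hub : resObj m n P f x Δstar ≤ ζ) :
    (∑ i, deriv (deriv f) ((P.mulVec x) i) * (P.mulVec Δstar) i ^ 2) =
        2 * Real.exp 1 * resObj m n P f x Δstar ∧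
      (∑ i, deriv (deriv f) ((P.mulVec x) i) * (P.mulVec Δstar) i ^ 2) ≤
        2 * Real.exp 1 * ζ := by
  set A := ∑ i, deriv f ((P.mulVec x) i) * (P.mulVec Δstar) i with hA
  set B := ∑ i, deriv (deriv f) ((P.mulVec x) i) * (P.mulVec Δstar) i ^ 2 with hB
  have e0 : Real.exp 1 ≠ 0 := (Real.exp_pos 1).ne'
  have hres : ∀ lam : ℝ, resObj m n P f x (lam • Δstar)
      = lam * A - (2 * Real.exp 1)⁻¹ * (lam ^ 2 * B) := by
    intro lam
    simp only [resObj, Matrix.mulVec_smul, Pi.smul_apply, smul_eq_mul, hA, hB,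
      Finset.mul_sum, mul_pow]
    ring_nf
    rw [sub_eq_neg_add]
    congr 1 <;> exact Finset.sum_congr rfl (fun i _ => by ring)
  set g : ℝ → ℝ := fun lam => lam * A - (2 * Real.exp 1)⁻¹ * (lam ^ 2 * B) with hg
  have hg1 : g 1 = resObj m n P f x Δstar := by
    have := hres 1
    simp only [one_smul] at this
    simpa [hg] using this.symm
  have hmax : IsLocalMax g 1 := by
    have hmem : Set.Ioo (1 - η) (1 + η) ∈ nhds (1 : ℝ) :=
      Ioo_mem_nhds (by linarith) (by linarith)
    filter_upwards [hmem] with lam hlam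
    rw [hg1]
    calc g lam = resObj m n P f x (lam • Δstar) := (hres lam).symm
    _ ≤ resObj m n P f x Δstar := hloc lam hlam
  have hderiv : HasDerivAt g (A - (2 * Real.exp 1)⁻¹ * (2 * B)) 1 := by
    have h1 : HasDerivAt (fun lam : ℝ => lam * A) A 1 := by
      simpa using (hasDerivAt_id (1 : ℝ)).mul_const A
    have h2 : HasDerivAt (fun lam : ℝ => (2 * Real.exp 1)⁻¹ * (lam ^ 2 * B))
        ((2 * Real.exp 1)⁻¹ * (2 * B)) 1 := by
      have : HasDerivAt (fun lam : ℝ => lam ^ 2 * B) (2 * B) 1 := by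
        simpa using ((hasDerivAt_pow 2 (1 : ℝ)).mul_const B)
      simpa [mul_assoc] using this.const_mul ((2 * Real.exp 1)⁻¹)
    exact h1.sub h2
  have hzero : A - (2 * Real.exp 1)⁻¹ * (2 * B) = 0 := by
    have := hmax.deriv_eq_zero
    rwa [hderiv.deriv] at this
  have hAB : A = (Real.exp 1)⁻¹ * B := by
    field_simp at hzero ⊢
    linarith
  have hres1 : resObj m n P f x Δstar = A - (2 * Real.exp 1)⁻¹ * B := by
    simp [resObj, hA, hB]
  have key : B = 2 * Real.exp 1 * resObj m n P f x Δstar := by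
    rw [hres1, hAB]
    field_simp
    ring
  refine ⟨key, ?_⟩
  rw [key]
  have : (0:ℝ) < 2 * Real.exp 1 := by positivity
  exact mul_le_mul_of_nonneg_left hub this.le
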